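/- If A is an informationally complete POVM on H_A and B is a verifiably pure state informationally complete POVM on H_B, then A⊗B is verifiably pure state informationally complete on H_A ⊗ H_B. -/

import Mathlib

open Matrix Kronecker
open scoped ComplexOrder

noncomputable section

def IsPOVM {n : Type*} [Fintype n] [DecidableEq n] {m : ℕ}
    (A : Fin m → Matrix n n ℂ) : Prop :=
  (∀ x, (A x).PosSemidef) ∧ ∑ x, A x = 1

def IsState {n : Type*} [Fintype n] [DecidableEq n] (ρ : Matrix n n ℂ) : Prop :=
  ρ.PosSemidef ∧ ρ.trace = 1

def IsPureState {n : Type*} [Fintype n] [DecidableEq n] (ρ : Matrix n n ℂ) : Prop :=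
  ρ.IsHermitian ∧ ρ * ρ = ρ ∧ ρ.rank = 1

def Rspan {n : Type*} [Fintype n] [DecidableEq n] {ι : Type*}
    (A : ι → Matrix n n ℂ) : Submodule ℝ (Matrix n n ℂ) :=
  Submodule.span ℝ (Set.range A)

def RPerp {n : Type*} [Fintype n] [DecidableEq n] {m : ℕ}
    (A : Fin m → Matrix n n ℂ) : Set (Matrix n n ℂ) :=
  {T | T.IsHermitian ∧ ∀ S ∈ Rspan A, (S * T).trace = 0}

def herm (n : Type*) [Fintype n] [DecidableEq n] : Submodule ℝ (Matrix n n ℂ) where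
  carrier := {T | T.IsHermitian}
  add_mem' := fun h1 h2 => h1.add h2
  zero_mem' := Matrix.isHermitian_zero
  smul_mem' := fun c T h => by
    rw [Set.mem_setOf_eq, Matrix.IsHermitian, Matrix.conjTranspose_smul, star_trivial, h]

def hermPerp {n : Type*} [Fintype n] [DecidableEq n]
    (V : Submodule ℝ (Matrix n n ℂ)) : Submodule ℝ (Matrix n n ℂ) where
  carrier := {T | T.IsHermitian ∧ ∀ S ∈ V, (S * T).trace = 0}
  add_mem' := fun h1 h2 => ⟨h1.1.add h2.1, fun S hS => by
    rw [mul_add, Matrix.trace_add, h1.2 S hS, h2.2 S hS, add_zero]⟩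
  zero_mem' := ⟨Matrix.isHermitian_zero, fun S _ => by simp⟩
  smul_mem' := fun c T h => ⟨by
      rw [Matrix.IsHermitian, Matrix.conjTranspose_smul, star_trivial, h.1],
    fun S hS => by rw [Matrix.mul_smul, Matrix.trace_smul, h.2 S hS, smul_zero]⟩

def tensSub {nA nB : Type*} [Fintype nA] [DecidableEq nA] [Fintype nB] [DecidableEq nB]
    (U : Submodule ℝ (Matrix nA nA ℂ)) (V : Submodule ℝ (Matrix nB nB ℂ)) :
    Submodule ℝ (Matrix (nA × nB) (nA × nB) ℂ) :=
  Submodule.span ℝ {T | ∃ S ∈ U, ∃ R ∈ V, T = S ⊗ₖ R}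

noncomputable def rankPM {n : Type*} [Fintype n] [DecidableEq n]
    (T : Matrix n n ℂ) (hT : T.IsHermitian) : ℕ :=
  min (Finset.univ.filter fun i => 0 < hT.eigenvalues i).card
      (Finset.univ.filter fun i => hT.eigenvalues i < 0).card

/-! ### Auxiliary lemmas -/

section Aux19

lemma qf_spectral {n : Type*} [Fintype n] [DecidableEq n] {T : Matrix n n ℂ}
    (hT : T.IsHermitian) (x : n → ℂ) :
    star x ⬝ᵥ (T *ᵥ x) =
      ∑ i, (hT.eigenvalues i : ℂ) *
        (‖((star (hT.eigenvectorUnitary : Matrix n n ℂ)) *ᵥ x) i‖ : ℂ) ^ 2 := by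
  conv_lhs => rw [hT.spectral_theorem, Unitary.conjStarAlgAut_apply]
  set U := (hT.eigenvectorUnitary : Matrix n n ℂ)
  set y := (star U) *ᵥ x with hy
  have h1 : star x ⬝ᵥ ((U * diagonal (RCLike.ofReal ∘ hT.eigenvalues) * star U) *ᵥ x)
      = star y ⬝ᵥ (diagonal (RCLike.ofReal ∘ hT.eigenvalues) *ᵥ y) := by
    rw [hy]
    simp only [← mulVec_mulVec, dotProduct_mulVec, star_mulVec, ← vecMul_vecMul,
      Matrix.star_eq_conjTranspose, conjTranspose_conjTranspose]
  rw [h1]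
  simp only [dotProduct, mulVec_diagonal, Pi.star_apply, Function.comp_apply]
  congr 1; ext i
  rw [mul_left_comm]
  congr 1
  have := Complex.mul_conj' (y i)
  rw [mul_comm] at this
  rw [← this]
  rfl

lemma qf_re_spectral {n : Type*} [Fintype n] [DecidableEq n] {T : Matrix n n ℂ}
    (hT : T.IsHermitian) (x : n → ℂ) :
    (star x ⬝ᵥ (T *ᵥ x)).re =
      ∑ i, hT.eigenvalues i *
        ‖((star (hT.eigenvectorUnitary : Matrix n n ℂ)) *ᵥ x) i‖ ^ 2 := by
  rw [qf_spectral hT x, Complex.re_sum]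
  congr 1; ext i
  rw [← Complex.ofReal_pow, ← Complex.ofReal_mul, Complex.ofReal_re]

/-- extension by zero -/
def extZero {d : Type*} [DecidableEq d] (P : Finset d) :
    ({i // i ∈ P} → ℂ) →ₗ[ℂ] (d → ℂ) where
  toFun c := fun i => if h : i ∈ P then c ⟨i, h⟩ else 0
  map_add' c₁ c₂ := by ext i; by_cases h : i ∈ P <;> simp [h]
  map_smul' r c := by ext i; by_cases h : i ∈ P <;> simp [h]

lemma extZero_inj {d : Type*} [DecidableEq d] (P : Finset d) :
    Function.Injective (extZero P) := by
  intro c₁ c₂ h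
  ext ⟨i, hi⟩
  have := congrFun h i
  simpa [extZero, hi] using this

lemma unitary_mulVecLin_inj {d : Type*} [Fintype d] [DecidableEq d]
    (U : Matrix.unitaryGroup d ℂ) :
    Function.Injective (Matrix.mulVecLin (U : Matrix d d ℂ)) := by
  intro a b h
  have := congrArg (fun v => (star (U : Matrix d d ℂ)) *ᵥ v) h
  simpa [Matrix.mulVec_mulVec, Unitary.coe_star_mul_self] using this

lemma star_mulVec_unitary {d : Type*} [Fintype d] [DecidableEq d]
    (U : Matrix.unitaryGroup d ℂ) (y : d → ℂ) :
    (star (U : Matrix d d ℂ)) *ᵥ ((U : Matrix d d ℂ) *ᵥ y) = y := by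
  rw [Matrix.mulVec_mulVec, Unitary.coe_star_mul_self, Matrix.one_mulVec]

lemma finrank_le_posCount {n : Type*} [Fintype n] [DecidableEq n] {T : Matrix n n ℂ}
    (hT : T.IsHermitian) (W : Submodule ℂ (n → ℂ))
    (h : ∀ x ∈ W, x ≠ 0 → 0 < (star x ⬝ᵥ (T *ᵥ x)).re) :
    Module.finrank ℂ W ≤ (Finset.univ.filter fun i => 0 < hT.eigenvalues i).card := by
  classical
  set P := (Finset.univ.filter fun i => 0 < hT.eigenvalues i)
  set U := (hT.eigenvectorUnitary : Matrix n n ℂ)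
  let L : (n → ℂ) →ₗ[ℂ] ({i // i ∈ P} → ℂ) :=
    (LinearMap.funLeft ℂ ℂ (Subtype.val)).comp (Matrix.mulVecLin (star U))
  have hinj : Function.Injective (L.comp W.subtype) := by
    rw [← LinearMap.ker_eq_bot, LinearMap.ker_eq_bot']
    intro w hw
    have hx0 : ∀ i ∈ P, ((star U) *ᵥ (w : n → ℂ)) i = 0 := by
      intro i hi
      have := congrFun hw ⟨i, hi⟩
      simpa [L, LinearMap.funLeft] using this
    by_contra hne
    have hwne : (w : n → ℂ) ≠ 0 := fun hc => hne (Subtype.ext hc)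
    have hpos := h w w.2 hwne
    rw [qf_re_spectral hT] at hpos
    have : (∑ i, hT.eigenvalues i * ‖((star U) *ᵥ (w : n → ℂ)) i‖ ^ 2) ≤ 0 := by
      apply Finset.sum_nonpos
      intro i _
      by_cases hi : i ∈ P
      · rw [hx0 i hi]; simp
      · have : ¬ (0 < hT.eigenvalues i) := by simpa [P] using hi
        have hle : hT.eigenvalues i ≤ 0 := le_of_not_gt this
        exact mul_nonpos_iff.2 (Or.inr ⟨hle, by positivity⟩)
    linarith
  calc Module.finrank ℂ W ≤ Module.finrank ℂ ({i // i ∈ P} → ℂ) :=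
        LinearMap.finrank_le_finrank_of_injective hinj
    _ = P.card := by simp [Module.finrank_pi]

lemma finrank_le_negCount {n : Type*} [Fintype n] [DecidableEq n] {T : Matrix n n ℂ}
    (hT : T.IsHermitian) (W : Submodule ℂ (n → ℂ))
    (h : ∀ x ∈ W, x ≠ 0 → (star x ⬝ᵥ (T *ᵥ x)).re < 0) :
    Module.finrank ℂ W ≤ (Finset.univ.filter fun i => hT.eigenvalues i < 0).card := by
  classical
  set P := (Finset.univ.filter fun i => hT.eigenvalues i < 0)
  set U := (hT.eigenvectorUnitary : Matrix n n ℂ)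
  let L : (n → ℂ) →ₗ[ℂ] ({i // i ∈ P} → ℂ) :=
    (LinearMap.funLeft ℂ ℂ (Subtype.val)).comp (Matrix.mulVecLin (star U))
  have hinj : Function.Injective (L.comp W.subtype) := by
    rw [← LinearMap.ker_eq_bot, LinearMap.ker_eq_bot']
    intro w hw
    have hx0 : ∀ i ∈ P, ((star U) *ᵥ (w : n → ℂ)) i = 0 := by
      intro i hi
      have := congrFun hw ⟨i, hi⟩
      simpa [L, LinearMap.funLeft] using this
    by_contra hne
    have hwne : (w : n → ℂ) ≠ 0 := fun hc => hne (Subtype.ext hc)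
    have hpos := h w w.2 hwne
    rw [qf_re_spectral hT] at hpos
    have : (0:ℝ) ≤ ∑ i, hT.eigenvalues i * ‖((star U) *ᵥ (w : n → ℂ)) i‖ ^ 2 := by
      apply Finset.sum_nonneg
      intro i _
      by_cases hi : i ∈ P
      · rw [hx0 i hi]; simp
      · have : ¬ (hT.eigenvalues i < 0) := by simpa [P] using hi
        have hle : 0 ≤ hT.eigenvalues i := le_of_not_gt this
        positivity
    linarith
  calc Module.finrank ℂ W ≤ Module.finrank ℂ ({i // i ∈ P} → ℂ) :=
        LinearMap.finrank_le_finrank_of_injective hinj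
    _ = P.card := by simp [Module.finrank_pi]

lemma posCount_le_of_embed {N d : Type*} [Fintype N] [DecidableEq N] [Fintype d] [DecidableEq d]
    {T : Matrix N N ℂ} (hT : T.IsHermitian) {D : Matrix d d ℂ} (hD : D.IsHermitian)
    (φ : (d → ℂ) →ₗ[ℂ] (N → ℂ)) (hφ : Function.Injective φ)
    (hq : ∀ v, (star (φ v) ⬝ᵥ (T *ᵥ φ v)).re = (star v ⬝ᵥ (D *ᵥ v)).re) :
    (Finset.univ.filter fun i => 0 < hD.eigenvalues i).card ≤
      (Finset.univ.filter fun i => 0 < hT.eigenvalues i).card := by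
  classical
  set P := (Finset.univ.filter fun i => 0 < hD.eigenvalues i) with hP
  set UD := hD.eigenvectorUnitary with hUD
  set F : ({i // i ∈ P} → ℂ) →ₗ[ℂ] (N → ℂ) :=
    φ ∘ₗ (Matrix.mulVecLin (UD : Matrix d d ℂ)) ∘ₗ extZero P with hF
  have hFinj : Function.Injective F := by
    simp only [hF, LinearMap.coe_comp]
    exact hφ.comp ((unitary_mulVecLin_inj UD).comp (extZero_inj P))
  have key : ∀ c : {i // i ∈ P} → ℂ, c ≠ 0 → 0 < (star (F c) ⬝ᵥ (T *ᵥ F c)).re := by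
    intro c hc
    have h1 : (star (F c) ⬝ᵥ (T *ᵥ F c)).re
        = ∑ i, hD.eigenvalues i * ‖extZero P c i‖ ^ 2 := by
      have : F c = φ ((UD : Matrix d d ℂ) *ᵥ extZero P c) := rfl
      rw [this, hq, qf_re_spectral hD, ← hUD]
      congr 1; ext i
      rw [star_mulVec_unitary]
    rw [h1]
    obtain ⟨j, hj⟩ : ∃ j, c j ≠ 0 := by
      by_contra hall; push_neg at hall; exact hc (funext hall)
    have hjP : (j : d) ∈ P := j.2
    refine Finset.sum_pos' ?_ ⟨(j : d), Finset.mem_univ _, ?_⟩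
    · intro i _
      by_cases hi : i ∈ P
      · have : 0 < hD.eigenvalues i := (Finset.mem_filter.mp hi).2
        positivity
      · have : extZero P c i = 0 := by simp [extZero, hi]
        rw [this]; simp
    · have h1 : 0 < hD.eigenvalues (j : d) := (Finset.mem_filter.mp hjP).2
      have h2 : extZero P c (j : d) = c j := by
        rcases j with ⟨j, hj'⟩; simp [extZero, hj']
      rw [h2]
      have h3 : 0 < ‖c j‖ ^ 2 := pow_pos (norm_pos_iff.mpr hj) 2
      exact mul_pos h1 h3
  have hcard : P.card = Module.finrank ℂ (LinearMap.range F) := by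
    rw [LinearMap.finrank_range_of_inj hFinj]
    simp [Module.finrank_pi]
  rw [hcard]
  apply finrank_le_posCount hT
  rintro x ⟨c, rfl⟩ hx
  exact key c (fun h0 => hx (by rw [h0, map_zero]))

lemma negCount_le_of_embed {N d : Type*} [Fintype N] [DecidableEq N] [Fintype d] [DecidableEq d]
    {T : Matrix N N ℂ} (hT : T.IsHermitian) {D : Matrix d d ℂ} (hD : D.IsHermitian)
    (φ : (d → ℂ) →ₗ[ℂ] (N → ℂ)) (hφ : Function.Injective φ)
    (hq : ∀ v, (star (φ v) ⬝ᵥ (T *ᵥ φ v)).re = (star v ⬝ᵥ (D *ᵥ v)).re) :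
    (Finset.univ.filter fun i => hD.eigenvalues i < 0).card ≤
      (Finset.univ.filter fun i => hT.eigenvalues i < 0).card := by
  classical
  set P := (Finset.univ.filter fun i => hD.eigenvalues i < 0) with hP
  set UD := hD.eigenvectorUnitary with hUD
  set F : ({i // i ∈ P} → ℂ) →ₗ[ℂ] (N → ℂ) :=
    φ ∘ₗ (Matrix.mulVecLin (UD : Matrix d d ℂ)) ∘ₗ extZero P with hF
  have hFinj : Function.Injective F := by
    simp only [hF, LinearMap.coe_comp]
    exact hφ.comp ((unitary_mulVecLin_inj UD).comp (extZero_inj P))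
  have key : ∀ c : {i // i ∈ P} → ℂ, c ≠ 0 → (star (F c) ⬝ᵥ (T *ᵥ F c)).re < 0 := by
    intro c hc
    have h1 : (star (F c) ⬝ᵥ (T *ᵥ F c)).re
        = ∑ i, hD.eigenvalues i * ‖extZero P c i‖ ^ 2 := by
      have : F c = φ ((UD : Matrix d d ℂ) *ᵥ extZero P c) := rfl
      rw [this, hq, qf_re_spectral hD, ← hUD]
      congr 1; ext i
      rw [star_mulVec_unitary]
    rw [h1]
    obtain ⟨j, hj⟩ : ∃ j, c j ≠ 0 := by
      by_contra hall; push_neg at hall; exact hc (funext hall)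
    have hjP : (j : d) ∈ P := j.2
    have hneg : 0 < ∑ i, -(hD.eigenvalues i * ‖extZero P c i‖ ^ 2) := by
      refine Finset.sum_pos' ?_ ⟨(j : d), Finset.mem_univ _, ?_⟩
      · intro i _
        by_cases hi : i ∈ P
        · have : hD.eigenvalues i < 0 := (Finset.mem_filter.mp hi).2
          have : 0 ≤ (-hD.eigenvalues i) * ‖extZero P c i‖ ^ 2 := by
            apply mul_nonneg (by linarith) (by positivity)
          linarith [this]
        · have : extZero P c i = 0 := by simp [extZero, hi]
          rw [this]; simp
      · have h1 : hD.eigenvalues (j : d) < 0 := (Finset.mem_filter.mp hjP).2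
        have h2 : extZero P c (j : d) = c j := by
          rcases j with ⟨j, hj'⟩; simp [extZero, hj']
        rw [h2]
        have h3 : 0 < ‖c j‖ ^ 2 := pow_pos (norm_pos_iff.mpr hj) 2
        nlinarith
    rw [Finset.sum_neg_distrib] at hneg
    linarith
  have hcard : P.card = Module.finrank ℂ (LinearMap.range F) := by
    rw [LinearMap.finrank_range_of_inj hFinj]
    simp [Module.finrank_pi]
  rw [hcard]
  apply finrank_le_negCount hT
  rintro x ⟨c, rfl⟩ hx
  exact key c (fun h0 => hx (by rw [h0, map_zero]))

lemma rankPM_le_of_embed {N d : Type*} [Fintype N] [DecidableEq N] [Fintype d] [DecidableEq d]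
    {T : Matrix N N ℂ} (hT : T.IsHermitian) {D : Matrix d d ℂ} (hD : D.IsHermitian)
    (φ : (d → ℂ) →ₗ[ℂ] (N → ℂ)) (hφ : Function.Injective φ)
    (hq : ∀ v, star (φ v) ⬝ᵥ (T *ᵥ φ v) = star v ⬝ᵥ (D *ᵥ v)) :
    rankPM D hD ≤ rankPM T hT := by
  have hq' : ∀ v, (star (φ v) ⬝ᵥ (T *ᵥ φ v)).re = (star v ⬝ᵥ (D *ᵥ v)).re :=
    fun v => by rw [hq v]
  exact min_le_min (posCount_le_of_embed hT hD φ hφ hq') (negCount_le_of_embed hT hD φ hφ hq')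

/-! ### Block contraction -/

def blockC {dA dB : Type*} [Fintype dA] [Fintype dB]
    (S : Matrix dA dA ℂ) (T : Matrix (dA × dB) (dA × dB) ℂ) : Matrix dB dB ℂ :=
  Matrix.of fun a b => ∑ k, ∑ l, S k l * T (l, a) (k, b)

lemma trace_kron_mul {dA dB : Type*} [Fintype dA] [Fintype dB]
    (S : Matrix dA dA ℂ) (R : Matrix dB dB ℂ) (T : Matrix (dA × dB) (dA × dB) ℂ) :
    ((S ⊗ₖ R) * T).trace = (R * blockC S T).trace := by
  have swap3 : ∀ (f : dA → dA → dB → ℂ),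
      (∑ k, ∑ l, ∑ b, f k l b) = ∑ b, ∑ k, ∑ l, f k l b := fun f =>
    (Finset.sum_congr rfl fun k _ => Finset.sum_comm).trans Finset.sum_comm
  simp only [Matrix.trace, Matrix.diag_apply, Matrix.mul_apply, blockC, Matrix.of_apply,
    kroneckerMap_apply, Fintype.sum_prod_type, Finset.mul_sum, Finset.sum_mul]
  rw [Finset.sum_comm]
  refine Finset.sum_congr rfl fun a _ => ?_
  rw [swap3 (fun k l b => S k l * R a b * T (l, b) (k, a))]
  refine Finset.sum_congr rfl fun b _ => ?_
  refine Finset.sum_congr rfl fun k _ => ?_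
  refine Finset.sum_congr rfl fun l _ => ?_
  ring

lemma isHermitian_entry {n : Type*} {A : Matrix n n ℂ} (hA : A.IsHermitian) (i j : n) :
    star (A i j) = A j i := by
  conv_rhs => rw [← hA]
  simp

lemma blockC_isHermitian {dA dB : Type*} [Fintype dA] [Fintype dB]
    {S : Matrix dA dA ℂ} {T : Matrix (dA × dB) (dA × dB) ℂ}
    (hS : S.IsHermitian) (hT : T.IsHermitian) : (blockC S T).IsHermitian := by
  ext a b
  simp only [conjTranspose_apply, blockC, Matrix.of_apply, star_sum, star_mul']
  rw [Finset.sum_comm]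
  refine Finset.sum_congr rfl fun k _ => ?_
  refine Finset.sum_congr rfl fun l _ => ?_
  rw [isHermitian_entry hS, isHermitian_entry hT]
  try ring

lemma blockC_add {dA dB : Type*} [Fintype dA] [Fintype dB]
    (S₁ S₂ : Matrix dA dA ℂ) (T : Matrix (dA × dB) (dA × dB) ℂ) :
    blockC (S₁ + S₂) T = blockC S₁ T + blockC S₂ T := by
  ext a b
  simp [blockC, add_mul, Finset.sum_add_distrib]

lemma blockC_smul {dA dB : Type*} [Fintype dA] [Fintype dB]
    (c : ℂ) (S : Matrix dA dA ℂ) (T : Matrix (dA × dB) (dA × dB) ℂ) :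
    blockC (c • S) T = c • blockC S T := by
  ext a b
  simp [blockC, Finset.mul_sum, mul_assoc]

lemma blockC_std {dA dB : Type*} [Fintype dA] [DecidableEq dA] [Fintype dB]
    (i j : dA) (T : Matrix (dA × dB) (dA × dB) ℂ) :
    blockC (single j i 1) T = Matrix.of fun a b => T (i, a) (j, b) := by
  ext a b
  simp [blockC, Matrix.single, ite_and, Finset.sum_ite_eq, Finset.sum_ite_eq']

/-! ### Embeddings -/

def embA {dA dB : Type*} [DecidableEq dA] (i : dA) :
    (dB → ℂ) →ₗ[ℂ] (dA × dB → ℂ) where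
  toFun v := fun p => if p.1 = i then v p.2 else 0
  map_add' v w := by ext p; by_cases h : p.1 = i <;> simp [h]
  map_smul' c v := by ext p; by_cases h : p.1 = i <;> simp [h]

lemma embA_apply {dA dB : Type*} [DecidableEq dA] (i : dA) (v : dB → ℂ) (p : dA × dB) :
    embA i v p = if p.1 = i then v p.2 else 0 := rfl

lemma stdBasisMatrix_conjT {n : Type*} [Fintype n] [DecidableEq n] (i j : n) (c : ℂ) :
    (single i j c)ᴴ = single j i (star c) := by
  ext k l
  simp only [conjTranspose_apply, Matrix.single, Matrix.of_apply, apply_ite, star_zero]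
  by_cases h1 : i = l <;> by_cases h2 : j = k <;> simp [h1, h2, and_comm]

lemma cross_term {dA dB : Type*} [Fintype dA] [DecidableEq dA] [Fintype dB] [DecidableEq dB]
    (T : Matrix (dA × dB) (dA × dB) ℂ) (i j : dA) (v w : dB → ℂ) :
    star (embA i v) ⬝ᵥ (T *ᵥ embA j w) =
      star v ⬝ᵥ ((Matrix.of fun a b => T (i, a) (j, b)) *ᵥ w) := by
  simp [dotProduct, mulVec, embA, Fintype.sum_prod_type, apply_ite, ite_mul, mul_ite,
    Finset.sum_ite_irrel, Finset.sum_ite_eq', Finset.mul_sum]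

end Aux19

/-- If `A` is informationally complete and `B` is verifiably pure state
informationally complete (every nonzero `T ∈ R(B)^⊥` has `rank±(T) ≥ 2`), then `A ⊗ B` is
verifiably pure state informationally complete. -/
theorem stmt19 {dA dB mA mB : ℕ}
    (A : Fin mA → Matrix (Fin dA) (Fin dA) ℂ) (B : Fin mB → Matrix (Fin dB) (Fin dB) ℂ)
    (hA : IsPOVM A) (hB : IsPOVM B)
    (hIC : Rspan A = herm (Fin dA))
    (hVB : ∀ T ∈ hermPerp (Rspan B), T ≠ 0 → ∀ hT : T.IsHermitian, 2 ≤ rankPM T hT) :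
    ∀ T ∈ hermPerp (Rspan (fun p : Fin mA × Fin mB => A p.1 ⊗ₖ B p.2)),
      T ≠ 0 → ∀ hT : T.IsHermitian, 2 ≤ rankPM T hT := by
  intro T hTmem hTne hT
  obtain ⟨hTherm, hTorth⟩ := hTmem
  -- Step 1: orthogonality against S ⊗ₖ B y for every Hermitian S
  have step1 : ∀ (y : Fin mB) (S : Matrix (Fin dA) (Fin dA) ℂ), S.IsHermitian →
      ((S ⊗ₖ B y) * T).trace = 0 := by
    intro y S hS
    let f : Matrix (Fin dA) (Fin dA) ℂ →ₗ[ℝ] ℂ :=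
      { toFun := fun S => ((S ⊗ₖ B y) * T).trace
        map_add' := fun S1 S2 => by
          simp only [Matrix.add_kronecker, Matrix.add_mul, Matrix.trace_add]
        map_smul' := fun c S => by
          simp only [Matrix.smul_kronecker, Matrix.smul_mul, Matrix.trace_smul,
            RingHom.id_apply] }
    have hle : Rspan A ≤ LinearMap.ker f := by
      rw [Rspan, Submodule.span_le]
      rintro _ ⟨x, rfl⟩
      simp only [SetLike.mem_coe, LinearMap.mem_ker]
      exact hTorth _ (Submodule.subset_span ⟨(x, y), rfl⟩)
    have hSmem : S ∈ Rspan A := by rw [hIC]; exact hS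
    exact hle hSmem
  -- Step 2: for Hermitian S, blockC S T ∈ hermPerp (Rspan B)
  have step2 : ∀ S : Matrix (Fin dA) (Fin dA) ℂ, S.IsHermitian →
      blockC S T ∈ hermPerp (Rspan B) := by
    intro S hS
    refine ⟨blockC_isHermitian hS hTherm, ?_⟩
    intro R hR
    let g : Matrix (Fin dB) (Fin dB) ℂ →ₗ[ℝ] ℂ :=
      { toFun := fun R => (R * blockC S T).trace
        map_add' := fun R1 R2 => by simp only [Matrix.add_mul, Matrix.trace_add]
        map_smul' := fun c R => by
          simp only [Matrix.smul_mul, Matrix.trace_smul, RingHom.id_apply] }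
    have hle : Rspan B ≤ LinearMap.ker g := by
      rw [Rspan, Submodule.span_le]
      rintro _ ⟨y, rfl⟩
      simp only [SetLike.mem_coe, LinearMap.mem_ker]
      show (B y * blockC S T).trace = 0
      rw [← trace_kron_mul]
      exact step1 y S hS
    exact hle hR
  -- generic quadratic form formula
  have qform : ∀ v : Fin dB → ℂ, ∀ (i j : Fin dA),
      star (embA i v) ⬝ᵥ (T *ᵥ embA j v) =
        star v ⬝ᵥ ((Matrix.of fun a b => T (i, a) (j, b)) *ᵥ v) :=
    fun v i j => cross_term T i j v v
  by_cases hdiag : ∀ (i : Fin dA) (a b : Fin dB), T (i, a) (i, b) = 0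
  · -- all diagonal blocks vanish; use an off-diagonal block
    obtain ⟨p, q, hpq⟩ : ∃ p q, T p q ≠ 0 := by
      by_contra h
      push_neg at h
      exact hTne (by ext p q; simpa using h p q)
    obtain ⟨i, a0⟩ := p
    obtain ⟨j, b0⟩ := q
    have hij : i ≠ j := by
      rintro rfl
      exact hpq (hdiag i a0 b0)
    set C : Matrix (Fin dB) (Fin dB) ℂ := Matrix.of fun a b => T (i, a) (j, b) with hC
    set C' : Matrix (Fin dB) (Fin dB) ℂ := Matrix.of fun a b => T (j, a) (i, b) with hC'
    -- for any ω, the matrix ω•C + (star ω)•C' is a Hermitian block in R(B)^⊥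
    have hblk : ∀ ω : ℂ, ω • C + (star ω) • C' ∈ hermPerp (Rspan B) := by
      intro ω
      have hSherm : (ω • single j i (1:ℂ) + (star ω) • single i j 1).IsHermitian := by
        show _ᴴ = _
        rw [conjTranspose_add, conjTranspose_smul, conjTranspose_smul,
          stdBasisMatrix_conjT, stdBasisMatrix_conjT, star_star, star_one]
        exact add_comm _ _
      have := step2 _ hSherm
      rwa [blockC_add, blockC_smul, blockC_smul, blockC_std, blockC_std, ← hC, ← hC'] at this
    -- quadratic form of the embedded vector
    have hqgen : ∀ (ω : ℂ) (v : Fin dB → ℂ),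
        star ((embA i + ω • embA j : (Fin dB → ℂ) →ₗ[ℂ] (Fin dA × Fin dB → ℂ)) v) ⬝ᵥ
            (T *ᵥ (embA i + ω • embA j : (Fin dB → ℂ) →ₗ[ℂ] (Fin dA × Fin dB → ℂ)) v)
          = star v ⬝ᵥ ((ω • C + (star ω) • C') *ᵥ v) := by
      intro ω v
      have hv : (embA i + ω • embA j : (Fin dB → ℂ) →ₗ[ℂ] (Fin dA × Fin dB → ℂ)) v
          = embA i v + ω • embA j v := rfl
      have hzi : (Matrix.of fun a b => T (i, a) (i, b)) = (0 : Matrix (Fin dB) (Fin dB) ℂ) := by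
        ext a b; simp [hdiag i a b]
      have hzj : (Matrix.of fun a b => T (j, a) (j, b)) = (0 : Matrix (Fin dB) (Fin dB) ℂ) := by
        ext a b; simp [hdiag j a b]
      rw [hv, star_add, star_smul, Matrix.mulVec_add, Matrix.mulVec_smul,
        add_dotProduct, smul_dotProduct, dotProduct_add, dotProduct_smul,
        dotProduct_add, dotProduct_smul]
      rw [cross_term, cross_term, cross_term, cross_term, hzi, hzj]
      rw [Matrix.add_mulVec, Matrix.smul_mulVec, Matrix.smul_mulVec,
        dotProduct_add, dotProduct_smul, dotProduct_smul]
      simp [smul_eq_mul, hC, hC']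
    -- injectivity of the embedding
    have hinj : ∀ ω : ℂ,
        Function.Injective
          ((embA i + ω • embA j : (Fin dB → ℂ) →ₗ[ℂ] (Fin dA × Fin dB → ℂ))) := by
      intro ω v w h
      ext b
      have := congrFun h (i, b)
      simpa [embA_apply, LinearMap.add_apply, LinearMap.smul_apply, hij] using this
    -- choose ω so that the block is nonzero
    by_cases h1 : C + C' ≠ 0
    · have hmem := hblk 1
      simp only [one_smul, star_one] at hmem
      have hD : (C + C').IsHermitian := hmem.1
      have hr := hVB _ hmem h1 hD
      have hq1 : ∀ v : Fin dB → ℂ,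
          star ((embA i + (1:ℂ) • embA j : (Fin dB → ℂ) →ₗ[ℂ] (Fin dA × Fin dB → ℂ)) v) ⬝ᵥ
              (T *ᵥ (embA i + (1:ℂ) • embA j : (Fin dB → ℂ) →ₗ[ℂ] (Fin dA × Fin dB → ℂ)) v)
            = star v ⬝ᵥ ((C + C') *ᵥ v) := by
        intro v
        have h := hqgen 1 v
        simp only [one_smul, star_one] at h ⊢
        exact h
      have := rankPM_le_of_embed hT hD _ (hinj 1) hq1
      exact le_trans hr this
    · push_neg at h1
      set D : Matrix (Fin dB) (Fin dB) ℂ := Complex.I • C + (star Complex.I) • C' with hD2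
      have hmem := hblk Complex.I
      have hDne : D ≠ 0 := by
        intro h0
        apply hpq
        have e1 : C a0 b0 + C' a0 b0 = 0 := by
          have := congrFun (congrFun h1 a0) b0
          simpa using this
        have e2 : Complex.I * C a0 b0 - Complex.I * C' a0 b0 = 0 := by
          have := congrFun (congrFun h0 a0) b0
          simpa [hD2, Complex.star_def, Complex.conj_I, sub_eq_add_neg, neg_mul] using this
        have e3 : C a0 b0 = 0 := by
          have e2' : C a0 b0 - C' a0 b0 = 0 := by
            have : Complex.I * (C a0 b0 - C' a0 b0) = 0 := by ring_nf; ring_nf at e2; linear_combination e2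
            rcases mul_eq_zero.mp this with h | h
            · exact absurd h Complex.I_ne_zero
            · exact h
          linear_combination (e1 + e2') / 2
        simpa [hC] using e3
      have hDherm : D.IsHermitian := hmem.1
      have hr := hVB _ hmem hDne hDherm
      have := rankPM_le_of_embed hT hDherm _ (hinj Complex.I) (hqgen Complex.I)
      exact le_trans hr this
  · -- some diagonal block is nonzero
    push_neg at hdiag
    obtain ⟨i, a0, b0, hab⟩ := hdiag
    set D : Matrix (Fin dB) (Fin dB) ℂ := Matrix.of fun a b => T (i, a) (i, b) with hDdef
    have hSherm : (single i i (1:ℂ)).IsHermitian := by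
      show _ᴴ = _
      rw [stdBasisMatrix_conjT, star_one]
    have hmem : D ∈ hermPerp (Rspan B) := by
      have := step2 _ hSherm
      rwa [blockC_std] at this
    have hDne : D ≠ 0 := by
      intro h0
      apply hab
      have := congrFun (congrFun h0 a0) b0
      simpa [hDdef] using this
    have hDherm : D.IsHermitian := hmem.1
    have hr := hVB _ hmem hDne hDherm
    have hinj : Function.Injective (embA (dA := Fin dA) (dB := Fin dB) i) := by
      intro v w h
      ext b
      have := congrFun h (i, b)
      simpa [embA_apply] using this
    have := rankPM_le_of_embed hT hDherm _ hinj (fun v => qform v i i)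
    exact le_trans hr this
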